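/- Suppose n, m, k ∈ ℕ satisfy n ≥ 2^{k+1} + 1 and 2^k + 1 ≤ m ≤ 2^{k+1} (Player 1 is in the weeds at level k). Then the value of ``Guess Who?'' is p(n,m) = 2^{k+1}/n − (2/3)·(2^{2k+1} + 1)/(n·m). -/

import Mathlib

/-- The linear pieces `w_t(x) = 2^(t+1)·x - (2/3)(2^(2t+1)+1)` of the scaled value
function: the piece at the dyadic level of `x` dominates all other pieces. -/
lemma gw_wcomp (s t : ℕ) (x : ℚ) (h1 : 2^s ≤ x) (h2 : x ≤ 2^(s+1)) :
    2^(t+1)*x - 2/3*(2^(2*t+1)+1) ≤ 2^(s+1)*x - 2/3*(2^(2*s+1)+1) := by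
  have hs0 : (0:ℚ) < 2^s := by positivity
  have ht0 : (0:ℚ) < 2^t := by positivity
  rcases lt_trichotomy s t with h | rfl | h
  · have hst : (2:ℚ)^(s+1) ≤ 2^t := pow_le_pow_right₀ (by norm_num) h
    have e1 : (2:ℚ)^(s+1) = 2*2^s := by ring
    have e2 : (2:ℚ)^(t+1) = 2*2^t := by ring
    have e3 : (2:ℚ)^(2*s+1) = 2*(2^s)^2 := by ring
    have e4 : (2:ℚ)^(2*t+1) = 2*(2^t)^2 := by ring
    rw [e1, e2, e3, e4]
    rw [e1] at hst h2
    have h5 : (0:ℚ) ≤ ((2:ℚ)^t - 2*2^s) * (2^t - 2^s) :=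
      mul_nonneg (by linarith) (by linarith)
    have h6 : (0:ℚ) ≤ ((2:ℚ)^t - 2^s) * (2*2^s - x) :=
      mul_nonneg (by linarith) (by linarith)
    nlinarith [h5, h6]
  · exact le_refl _
  · have hst : (2:ℚ)^(t+1) ≤ 2^s := pow_le_pow_right₀ (by norm_num) h
    have e1 : (2:ℚ)^(s+1) = 2*2^s := by ring
    have e2 : (2:ℚ)^(t+1) = 2*2^t := by ring
    have e3 : (2:ℚ)^(2*s+1) = 2*(2^s)^2 := by ring
    have e4 : (2:ℚ)^(2*t+1) = 2*(2^t)^2 := by ring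
    rw [e1, e2, e3, e4]
    rw [e2] at hst
    have h5 : (0:ℚ) ≤ ((2:ℚ)^s - 2^t) * (2^s - 2*2^t) :=
      mul_nonneg (by linarith) (by linarith)
    have h6 : (0:ℚ) ≤ ((2:ℚ)^s - 2^t) * (x - 2^s) :=
      mul_nonneg (by linarith) (by linarith)
    nlinarith [h5, h6]

/-- The closed form of the value of "Guess Who?": if `2^j < n ≤ 2^(j+1)` and
`2^k < m ≤ 2^(k+1)`, the value is the weeds formula when `k < j` and the lead
formula otherwise. -/
def gwF (n m j k : ℕ) : ℚ :=
  if k < j then 2^(k+1)/(n:ℚ) - 2/3*(2^(2*k+1)+1)/((n:ℚ)*(m:ℚ))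
  else 1 - (2^j*(n:ℚ) - 2/3*(2^(2*j)+2))/((n:ℚ)*(m:ℚ))

set_option maxHeartbeats 3000000 in
lemma gw_main (p : ℕ → ℕ → ℚ)
    (hp2 : ∀ n : ℕ, 2 ≤ n → p n 1 = 0)
    (hrec : ∀ n m : ℕ, ∀ hn : 2 ≤ n, 2 ≤ m →
      p n m = (Finset.Icc 1 (n - 1)).sup' (Finset.nonempty_Icc.mpr (show 1 ≤ n - 1 ∧ True from ⟨by omega, trivial⟩).1)
        (fun b => 1 - (b : ℚ) / (n : ℚ) * p m b
          - ((n - b : ℕ) : ℚ) / (n : ℚ) * p m (n - b))) :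
    ∀ N n m j k : ℕ, n + m ≤ N → 2^j < n → n ≤ 2^(j+1) → 2^k < m → m ≤ 2^(k+1) →
      p n m = gwF n m j k := by
  intro N
  induction N using Nat.strong_induction_on with
  | _ N IH =>
  intro n m j k hN hj1 hj2 hk1 hk2
  have h2jpos : 0 < 2^j := Nat.two_pow_pos j
  have h2kpos : 0 < 2^k := Nat.two_pow_pos k
  have hn2 : 2 ≤ n := by omega
  have hm2 : 2 ≤ m := by omega
  have hnq : (0:ℚ) < n := by exact_mod_cast show 0 < n by omega
  have hmq : (0:ℚ) < m := by exact_mod_cast show 0 < m by omega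
  have hnq0 : (n:ℚ) ≠ 0 := ne_of_gt hnq
  have hmq0 : (m:ℚ) ≠ 0 := ne_of_gt hmq
  have hmk : (2:ℚ)^k < (m:ℚ) := by exact_mod_cast hk1
  -- weeds values of `p m ·` below `2^k`, in unified piecewise-linear form
  have hw : ∀ x t : ℕ, 2^t ≤ x → x ≤ 2^(t+1) → x ≤ 2^k → m + x < N →
      (x:ℚ) * p m x = (2^(t+1)*(x:ℚ) - 2/3*(2^(2*t+1)+1)) / m := by
    intro x t ht1 ht2 htk hxN
    have hxpos : 0 < x := by have := Nat.two_pow_pos t; omega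
    have hxq0 : ((x:ℚ)) ≠ 0 := Nat.cast_ne_zero.mpr (by omega)
    rcases eq_or_lt_of_le ht1 with he | hlt
    · rcases Nat.eq_zero_or_pos t with rfl | htpos
      · have hx1 : x = 1 := by simpa using he.symm
        subst hx1
        rw [hp2 m hm2]
        norm_num
      · obtain ⟨s, rfl⟩ : ∃ s, t = s + 1 := ⟨t - 1, by omega⟩
        have hss : (2:ℕ)^s < 2^(s+1) := Nat.pow_lt_pow_succ (by norm_num)
        have h1 : 2^s < x := by omega
        have hsk : s < k := by
          have hle : (2:ℕ)^(s+1) ≤ 2^k := by omega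
          have := (Nat.pow_le_pow_iff_right (by norm_num : 1 < 2)).mp hle
          omega
        have hIH := IH (m + x) (by omega) m x k s (le_refl _) hk1 hk2 h1 (le_of_eq he.symm)
        simp only [gwF] at hIH; rw [if_pos hsk] at hIH
        rw [hIH]
        have hxq : (x:ℚ) = 2^(s+1) := by rw [← he]; push_cast; ring
        rw [hxq]
        field_simp
        ring
    · have htk' : t < k := by
        have h' : (2:ℕ)^t < 2^k := lt_of_lt_of_le hlt htk
        exact (Nat.pow_lt_pow_iff_right (by norm_num : 1 < 2)).mp h'
      have hIH := IH (m + x) (by omega) m x k t (le_refl _) hk1 hk2 hlt ht2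
      simp only [gwF] at hIH; rw [if_pos htk'] at hIH
      rw [hIH]
      field_simp
  -- lead values of `p m ·` above `2^k`
  have hl : ∀ x : ℕ, 2^k < x → m + x < N →
      (x:ℚ) * p m x = (x:ℚ) - 2^k + 2/3*(2^(2*k)+2)/m := by
    intro x hx hxN
    have hx2 : 2 ≤ x := by omega
    have h1 : 2^(Nat.log 2 (x-1)) ≤ x - 1 := Nat.pow_log_le_self 2 (by omega)
    have h2 : x - 1 < 2^(Nat.log 2 (x-1) + 1) := Nat.lt_pow_succ_log_self (by norm_num) _
    have hkt : ¬ Nat.log 2 (x-1) < k := by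
      intro hc
      have : (2:ℕ)^(Nat.log 2 (x-1)+1) ≤ 2^k := Nat.pow_le_pow_right (by norm_num) (by omega)
      omega
    have hIH := IH (m + x) (by omega) m x k (Nat.log 2 (x-1)) (le_refl _) hk1 hk2
      (by omega) (by omega)
    simp only [gwF] at hIH; rw [if_neg hkt] at hIH
    rw [hIH]
    have hxq0 : ((x:ℚ)) ≠ 0 := Nat.cast_ne_zero.mpr (by omega)
    field_simp
    ring
  have hsplit : ∀ (b' : ℕ) (P Q : ℚ), (1:ℚ) - (b':ℚ)/(n:ℚ) * P - ((n - b' : ℕ):ℚ)/(n:ℚ) * Q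
      = 1 - ((b':ℚ) * P + ((n - b' : ℕ):ℚ) * Q)/(n:ℚ) := by
    intro b' P Q
    ring
  rw [hrec n m hn2 hm2]
  by_cases hkj : k < j
  · -- ===== WEEDS =====
    have hn2k : 2^(k+1) < n := by
      have : (2:ℕ)^(k+1) ≤ 2^j := Nat.pow_le_pow_right (by norm_num) hkj
      omega
    have hpk : (2:ℕ)^(k+1) = 2*2^k := by ring
    -- the sharp lower bound for `x · p m x` on `[1, 2^k]` used in the weeds regime
    have star : ∀ x : ℕ, 1 ≤ x → x ≤ 2^k → m + x < N →
        (x:ℚ) - 2^k + 2/3*(2^(2*k)-1)/m ≤ (x:ℚ) * p m x := by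
      intro x hx1 hxk hxN
      have h1 : 2^(Nat.log 2 x) ≤ x := Nat.pow_log_le_self 2 (by omega)
      have h2 : x ≤ 2^(Nat.log 2 x + 1) := le_of_lt (Nat.lt_pow_succ_log_self (by norm_num) x)
      rw [hw x _ h1 h2 hxk hxN]
      have h1q : (2:ℚ)^(Nat.log 2 x) ≤ (x:ℚ) := by exact_mod_cast h1
      have h2q : (x:ℚ) ≤ 2^(Nat.log 2 x + 1) := by exact_mod_cast h2
      rcases Nat.eq_zero_or_pos k with rfl | hkpos
      · have hx' : x = 1 := by norm_num at hxk; omega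
        subst hx'
        simp only [Nat.log_one_right]
        norm_num
      · obtain ⟨κ, rfl⟩ : ∃ κ, k = κ + 1 := ⟨k - 1, by omega⟩
        have hcomp := gw_wcomp (Nat.log 2 x) κ (x:ℚ) h1q h2q
        have hxkq : (x:ℚ) ≤ 2^(κ+1) := by exact_mod_cast hxk
        have hmkq : (2:ℚ)^(κ+1) ≤ (m:ℚ) := le_of_lt hmk
        have key2 : (x:ℚ) - 2^(κ+1) + 2/3*(2^(2*(κ+1))-1)/m
            ≤ (2^(κ+1)*(x:ℚ) - 2/3*(2^(2*κ+1)+1))/m := by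
          rw [← sub_nonneg]
          have e : (2^(κ+1)*(x:ℚ) - 2/3*(2^(2*κ+1)+1))/m
              - ((x:ℚ) - 2^(κ+1) + 2/3*(2^(2*(κ+1))-1)/m)
              = ((m:ℚ) - 2^(κ+1)) * (2^(κ+1) - (x:ℚ)) / m := by
            field_simp; ring
          rw [e]
          exact div_nonneg (mul_nonneg (by linarith) (by linarith)) (le_of_lt hmq)
        refine le_trans key2 ?_
        exact (div_le_div_iff_of_pos_right hmq).mpr hcomp
    simp only [gwF]; rw [if_pos hkj]
    apply le_antisymm
    · rw [Finset.sup'_le_iff]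
      intro b hb
      rw [Finset.mem_Icc] at hb
      have hb1 : 1 ≤ b := hb.1
      have hbn : b ≤ n - 1 := hb.2
      have hcast : ((n - b : ℕ):ℚ) = (n:ℚ) - (b:ℚ) := by
        have hble : b ≤ n := by omega
        push_cast [hble]
        ring
      rw [hsplit b (p m b) (p m (n-b))]
      have hkey : (n:ℚ) - 2^(k+1) + 2/3*(2^(2*k+1)+1)/m
          ≤ (b:ℚ) * p m b + ((n - b : ℕ):ℚ) * p m (n-b) := by
        rw [hcast]
        by_cases hbk : b ≤ 2^k
        · have hc : 2^k < n - b := by omega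
          have hPc := hl (n-b) hc (by omega)
          rw [hcast] at hPc
          have hPb := star b hb1 hbk (by omega)
          rw [hPc]
          have e : ((b:ℚ) - 2^k + 2/3*(2^(2*k)-1)/m)
              + (((n:ℚ)-(b:ℚ)) - 2^k + 2/3*(2^(2*k)+2)/m)
              = (n:ℚ) - 2^(k+1) + 2/3*(2^(2*k+1)+1)/m := by field_simp; ring
          linarith
        · by_cases hck : n - b ≤ 2^k
          · have hbig : 2^k < b := by omega
            have hPb := hl b hbig (by omega)
            have hPc := star (n-b) (by omega) hck (by omega)
            rw [hcast] at hPc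
            rw [hPb]
            have e : (((n:ℚ)-(b:ℚ)) - 2^k + 2/3*(2^(2*k)-1)/m)
                + ((b:ℚ) - 2^k + 2/3*(2^(2*k)+2)/m)
                = (n:ℚ) - 2^(k+1) + 2/3*(2^(2*k+1)+1)/m := by field_simp; ring
            linarith
          · have hPb := hl b (by omega) (by omega)
            have hPc := hl (n-b) (by omega) (by omega)
            rw [hcast] at hPc
            rw [hPb, hPc]
            have e : ((b:ℚ) - 2^k + 2/3*(2^(2*k)+2)/m)
                + (((n:ℚ)-(b:ℚ)) - 2^k + 2/3*(2^(2*k)+2)/m)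
                - ((n:ℚ) - 2^(k+1) + 2/3*(2^(2*k+1)+1)/m) = 2/m := by field_simp; ring
            have h2m : (0:ℚ) < 2/m := by positivity
            linarith
      calc (1:ℚ) - ((b:ℚ) * p m b + ((n - b : ℕ):ℚ) * p m (n-b))/(n:ℚ)
          ≤ 1 - ((n:ℚ) - 2^(k+1) + 2/3*(2^(2*k+1)+1)/(m:ℚ))/(n:ℚ) :=
            sub_le_sub_left ((div_le_div_iff_of_pos_right hnq).mpr hkey) 1
        _ = 2^(k+1)/(n:ℚ) - 2/3*(2^(2*k+1)+1)/((n:ℚ)*(m:ℚ)) := by field_simp; ring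
    · have hmem : 2^k ∈ Finset.Icc 1 (n-1) := by
        rw [Finset.mem_Icc]
        constructor
        · omega
        · omega
      refine le_trans (le_of_eq ?_) (Finset.le_sup' _ hmem)
      have hPb := hw (2^k) k (le_refl _) (Nat.pow_le_pow_right (by norm_num) (by omega))
        (le_refl _) (by omega)
      have hc : 2^k < n - 2^k := by omega
      have hPc := hl (n - 2^k) hc (by omega)
      have hcast2 : ((n - 2^k : ℕ):ℚ) = (n:ℚ) - (2:ℚ)^k := by
        have hle : 2^k ≤ n := by omega
        push_cast [hle]
        ring
      have hck : ((2^k : ℕ):ℚ) = (2:ℚ)^k := by push_cast; ring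
      rw [hsplit (2^k) (p m (2^k)) (p m (n - 2^k)), hPb, hPc, hcast2, hck]
      field_simp
      ring
  · -- ===== LEAD =====
    simp only [gwF]; rw [if_neg hkj]
    rcases Nat.eq_zero_or_pos j with rfl | hjpos
    · -- n = 2
      have hn2' : n = 2 := by norm_num at hj1 hj2; omega
      subst hn2'
      apply le_antisymm
      · rw [Finset.sup'_le_iff]
        intro b hb
        rw [Finset.mem_Icc] at hb
        have hb1 : b = 1 := by omega
        subst hb1
        norm_num [hp2 m hm2]
      · have hmem : 1 ∈ Finset.Icc 1 (2-1) := by decide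
        refine le_trans (le_of_eq ?_) (Finset.le_sup' _ hmem)
        norm_num [hp2 m hm2]
    · obtain ⟨ι, rfl⟩ : ∃ ι, j = ι + 1 := ⟨j - 1, by omega⟩
      have hjk : ι + 1 ≤ k := by omega
      have h2jk : (2:ℕ)^(ι+1) ≤ 2^k := Nat.pow_le_pow_right (by norm_num) hjk
      have h2jk2 : (2:ℕ)^(ι+2) ≤ 2^(k+1) := Nat.pow_le_pow_right (by norm_num) (by omega)
      have h2ipos : 0 < 2^ι := Nat.two_pow_pos ι
      have hps : (2:ℕ)^(ι+1) = 2*2^ι := by ring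
      have hps2 : (2:ℕ)^(ι+2) = 4*2^ι := by ring
      have hpk : (2:ℕ)^(k+1) = 2*2^k := by ring
      -- lower bound on `x · p m x` via the `w_ι` piece, for `x ≤ 2^k`
      have starL : ∀ x : ℕ, 1 ≤ x → x ≤ 2^k → m + x < N →
          (2^(ι+1)*(x:ℚ) - 2/3*(2^(2*ι+1)+1))/m ≤ (x:ℚ) * p m x := by
        intro x hx1 hxk hxN
        have h1 : 2^(Nat.log 2 x) ≤ x := Nat.pow_log_le_self 2 (by omega)
        have h2 : x ≤ 2^(Nat.log 2 x + 1) := le_of_lt (Nat.lt_pow_succ_log_self (by norm_num) x)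
        rw [hw x _ h1 h2 hxk hxN]
        have h1q : (2:ℚ)^(Nat.log 2 x) ≤ (x:ℚ) := by exact_mod_cast h1
        have h2q : (x:ℚ) ≤ 2^(Nat.log 2 x + 1) := by exact_mod_cast h2
        exact (div_le_div_iff_of_pos_right hmq).mpr (gw_wcomp (Nat.log 2 x) ι (x:ℚ) h1q h2q)
      apply le_antisymm
      · rw [Finset.sup'_le_iff]
        intro b hb
        rw [Finset.mem_Icc] at hb
        have hb1 : 1 ≤ b := hb.1
        have hbn : b ≤ n - 1 := hb.2
        have hcast : ((n - b : ℕ):ℚ) = (n:ℚ) - (b:ℚ) := by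
          have hble : b ≤ n := by omega
          push_cast [hble]
          ring
        rw [hsplit b (p m b) (p m (n-b))]
        have hkey : (2^(ι+1)*(n:ℚ) - 2/3*(2^(2*(ι+1))+2))/m
            ≤ (b:ℚ) * p m b + ((n - b : ℕ):ℚ) * p m (n-b) := by
          rw [hcast]
          by_cases hbk : b ≤ 2^k
          · by_cases hck : n - b ≤ 2^k
            · have hPb := starL b hb1 hbk (by omega)
              have hPc := starL (n-b) (by omega) hck (by omega)
              rw [hcast] at hPc
              have e : (2^(ι+1)*(b:ℚ) - 2/3*(2^(2*ι+1)+1))/m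
                  + (2^(ι+1)*((n:ℚ)-(b:ℚ)) - 2/3*(2^(2*ι+1)+1))/m
                  = (2^(ι+1)*(n:ℚ) - 2/3*(2^(2*(ι+1))+2))/m := by field_simp; ring
              linarith
            · -- n - b > 2^k, so k = ι+1
              have hkeq : k = ι + 1 := by
                have h1 : 2^k < n := by omega
                have h2 : n ≤ 2^(ι+2) := hj2
                have := (Nat.pow_lt_pow_iff_right (by norm_num : 1 < 2)).mp
                  (lt_of_lt_of_le h1 h2)
                omega
                
              subst hkeq
              have hPc := hl (n-b) (by omega) (by omega)
              rw [hcast] at hPc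
              have hPb := starL b hb1 hbk (by omega)
              rw [hPc]
              have e : (2^(ι+1)*(b:ℚ) - 2/3*(2^(2*ι+1)+1))/m
                  + (((n:ℚ)-(b:ℚ)) - 2^(ι+1) + 2/3*(2^(2*(ι+1))+2)/m)
                  - (2^(ι+1)*(n:ℚ) - 2/3*(2^(2*(ι+1))+2))/m
                  = (((m:ℚ) - 2^(ι+1)) * (((n:ℚ)-(b:ℚ)) - 2^(ι+1)) + 2)/m := by
                field_simp; ring
              have hcq : (2:ℚ)^(ι+1) < (n:ℚ) - (b:ℚ) := by
                have : (2:ℕ)^(ι+1) < n - b := by omega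
                rw [← hcast]
                exact_mod_cast this
              have hnn : (0:ℚ) ≤ (((m:ℚ) - 2^(ι+1)) * (((n:ℚ)-(b:ℚ)) - 2^(ι+1)) + 2)/m :=
                div_nonneg (by nlinarith [hmk, hcq]) (le_of_lt hmq)
              linarith
          · -- b > 2^k, so k = ι+1 and n-b ≤ 2^k
            have hkeq : k = ι + 1 := by
              have h1 : 2^k < n := by omega
              have := (Nat.pow_lt_pow_iff_right (by norm_num : 1 < 2)).mp
                (lt_of_lt_of_le h1 hj2)
              omega
            subst hkeq
            have hck : n - b ≤ 2^(ι+1) := by omega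
            have hPb := hl b (by omega) (by omega)
            have hPc := starL (n-b) (by omega) hck (by omega)
            rw [hcast] at hPc
            rw [hPb]
            have e : ((b:ℚ) - 2^(ι+1) + 2/3*(2^(2*(ι+1))+2)/m)
                + (2^(ι+1)*((n:ℚ)-(b:ℚ)) - 2/3*(2^(2*ι+1)+1))/m
                - (2^(ι+1)*(n:ℚ) - 2/3*(2^(2*(ι+1))+2))/m
                = (((m:ℚ) - 2^(ι+1)) * ((b:ℚ) - 2^(ι+1)) + 2)/m := by
              field_simp; ring
            have hbq : (2:ℚ)^(ι+1) < (b:ℚ) := by exact_mod_cast show (2:ℕ)^(ι+1) < b by omega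
            have hnn : (0:ℚ) ≤ (((m:ℚ) - 2^(ι+1)) * ((b:ℚ) - 2^(ι+1)) + 2)/m :=
              div_nonneg (by nlinarith [hmk, hbq]) (le_of_lt hmq)
            linarith
        calc (1:ℚ) - ((b:ℚ) * p m b + ((n - b : ℕ):ℚ) * p m (n-b))/(n:ℚ)
            ≤ 1 - ((2^(ι+1)*(n:ℚ) - 2/3*(2^(2*(ι+1))+2))/(m:ℚ))/(n:ℚ) :=
              sub_le_sub_left ((div_le_div_iff_of_pos_right hnq).mpr hkey) 1
          _ = 1 - (2^(ι+1)*(n:ℚ) - 2/3*(2^(2*(ι+1))+2))/((n:ℚ)*(m:ℚ)) := by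
              field_simp
      · -- witness: the even split b = n/2
        have hmem : n/2 ∈ Finset.Icc 1 (n-1) := by
          rw [Finset.mem_Icc]
          omega
        refine le_trans (le_of_eq ?_) (Finset.le_sup' _ hmem)
        have hbr1 : 2^ι ≤ n/2 := by omega
        have hbr2 : n/2 ≤ 2^(ι+1) := by omega
        have hbr3 : 2^ι ≤ n - n/2 := by omega
        have hbr4 : n - n/2 ≤ 2^(ι+1) := by omega
        have hPb := hw (n/2) ι hbr1 hbr2 (by omega) (by omega)
        have hPc := hw (n - n/2) ι hbr3 hbr4 (by omega) (by omega)
        have hcast3 : ((n - n/2 : ℕ):ℚ) = (n:ℚ) - ((n/2 : ℕ):ℚ) := by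
          have hle : n/2 ≤ n := by omega
          push_cast [hle]
          ring
        rw [hsplit (n/2) (p m (n/2)) (p m (n - n/2)), hPb, hPc, hcast3]
        field_simp
        ring

/-- The value of "Guess Who?" when Player 1 is in the weeds at level `k`:
if `p` is the value function of the game (characterized by its recurrence),
`n ≥ 2^(k+1) + 1` and `2^k + 1 ≤ m ≤ 2^(k+1)`, then
`p n m = 2^(k+1)/n − (2/3)·(2^(2k+1)+1)/(n·m)`. -/
theorem guess_who_value_in_the_weeds
    (p : ℕ → ℕ → ℚ)
    (hp1 : ∀ m : ℕ, 2 ≤ m → p 1 m = 1)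
    (hp2 : ∀ n : ℕ, 2 ≤ n → p n 1 = 0)
    (hrec : ∀ n m : ℕ, ∀ hn : 2 ≤ n, 2 ≤ m →
      p n m = (Finset.Icc 1 (n - 1)).sup' (Finset.nonempty_Icc.mpr (by omega))
        (fun b => 1 - (b : ℚ) / (n : ℚ) * p m b
          - ((n - b : ℕ) : ℚ) / (n : ℚ) * p m (n - b)))
    (n m k : ℕ) (hn : 2 ^ (k + 1) + 1 ≤ n) (hm1 : 2 ^ k + 1 ≤ m) (hm2 : m ≤ 2 ^ (k + 1)) :
    p n m = 2 ^ (k + 1) / (n : ℚ) - 2 / 3 * (2 ^ (2 * k + 1) + 1) / ((n : ℚ) * (m : ℚ)) := by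
  have h2k1 : 0 < 2^(k+1) := Nat.two_pow_pos (k+1)
  have hj1 : 2^(Nat.log 2 (n-1)) < n := by
    have := Nat.pow_log_le_self 2 (x := n-1) (by omega)
    omega
  have hj2' : n - 1 < 2^(Nat.log 2 (n-1) + 1) := Nat.lt_pow_succ_log_self (by norm_num) _
  have hj2 : n ≤ 2^(Nat.log 2 (n-1) + 1) := by omega
  have hkj : k < Nat.log 2 (n-1) := by
    have h1 : (2:ℕ)^(k+1) ≤ n - 1 := by omega
    have := (Nat.pow_lt_pow_iff_right (by norm_num : 1 < 2)).mp (lt_of_le_of_lt h1 hj2')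
    omega
  have := gw_main p hp2 hrec (n+m) n m (Nat.log 2 (n-1)) k (le_refl _) hj1 hj2 (by omega) hm2
  rw [this]
  simp only [gwF]
  rw [if_pos hkj]
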